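/- The axiom Kv^r∨ is valid: over first-order epistemic models with an equivalence epistemic relation, if there is an accessible world satisfying both φ and ψ, and the agent knows the value of c conditional on φ, and knows the value of c conditional on ψ, then the agent knows the value of c conditional on φ∨ψ. -/
import Mathlib


/-- Conditional knowing value Kv(φ,c): any two accessible φ-worlds agree on c. -/
def kvr {S C D : Type*} (rel : S → S → Prop) (VC : C → S → D)
    (φ : S → Prop) (c : C) (s : S) : Prop :=
  ∀ t1 t2, rel s t1 → rel s t2 → φ t1 → φ t2 → VC c t1 = VC c t2

/-- Axiom Kv^r∨: K̂(φ∧ψ) ∧ Kv(φ,c) ∧ Kv(ψ,c) → Kv(φ∨ψ,c) is valid over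
FO epistemic models with an equivalence epistemic relation. -/
theorem kvr_or_valid {S C D : Type*} (rel : S → S → Prop)
    (hequiv : Equivalence rel) (VC : C → S → D) (φ ψ : S → Prop) (c : C) (s : S)
    (hhat : ∃ t, rel s t ∧ φ t ∧ ψ t)
    (hφ : kvr rel VC φ c s) (hψ : kvr rel VC ψ c s) :
    kvr rel VC (fun t => φ t ∨ ψ t) c s := by
  obtain ⟨u, hu, huφ, huψ⟩ := hhat
  intro t1 t2 h1 h2 hp1 hp2
  have e1 : VC c t1 = VC c u := by
    cases hp1 with
    | inl h => exact hφ t1 u h1 hu h huφ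
    | inr h => exact hψ t1 u h1 hu h huψ
  have e2 : VC c t2 = VC c u := by
    cases hp2 with
    | inl h => exact hφ t2 u h2 hu h huφ
    | inr h => exact hψ t2 u h2 hu h huψ
  rw [e1, e2]
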